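/- Let K be a filtered category and let (fᵏ : Aᵏ → Bᵏ)_{k∈K} be a diagram in the arrow category of ∞-categories (or of ordinary categories) such that each fᵏ is cofinal (final). Then the induced functor on colimits colim_k Aᵏ → colim_k Bᵏ is cofinal. -/

import Mathlib

open CategoryTheory CategoryTheory.Limits

universe w2 w vv uu

namespace FccAux

/-- The chaotic (indiscrete) category on a type. -/
structure Chaotic (X : Type w) : Type w where
  as : X

def chaoticInst (X : Type w) : Category.{w2} (Chaotic X) where
  Hom _ _ := PUnit
  id _ := ⟨⟩
  comp _ _ := ⟨⟩

/-- The chaotic category as an object of `Cat`. -/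
def chaoticCat (X : Type w) : Cat.{w2, w} := @Cat.of (Chaotic X) (chaoticInst X)

/-- Any function into `X` induces a functor into the chaotic category. -/
def chaoticFunctor {C : Type uu} [Category.{vv} C] {X : Type w} (g : C → X) :
    C ⥤ (chaoticCat.{w2} X : Type w) where
  obj c := ⟨g c⟩
  map _ := ⟨⟩

theorem chaotic_ext {C : Type uu} [Category.{vv} C] {X : Type w}
    (F G : C ⥤ (chaoticCat.{w2} X : Type w)) (h : ∀ c, F.obj c = G.obj c) : F = G :=
  CategoryTheory.Functor.ext h (fun _ _ _ => @Subsingleton.elim PUnit.{w2+1} ⟨fun a b => by cases a; cases b; rfl⟩ _ _)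

theorem cat_congr_obj {C D : Cat.{w2, w}} {F G : C ⟶ D} (h : F = G) (x : C) :
    F.toFunctor.obj x = G.toFunctor.obj x :=
  Functor.congr_obj (congrArg Cat.Hom.toFunctor h) x

theorem cat_congr_hom {C D : Cat.{w2, w}} {F G : C ⟶ D} (h : F = G) {X Y : C} (f : X ⟶ Y) :
    F.toFunctor.map f = eqToHom (cat_congr_obj h X) ≫ G.toFunctor.map f ≫
      eqToHom (cat_congr_obj h Y).symm :=
  Functor.congr_hom (congrArg Cat.Hom.toFunctor h) f

variable {K : Type uu} [Category.{vv} K]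

/-- A cocone over a `Type`-valued objects diagram, as a cocone in `Cat` via chaotic categories. -/
def chaoticCocone {F : K ⥤ Cat.{w2, w}} (s : Cocone (F ⋙ Cat.objects.{w2, w})) :
    Cocone F where
  pt := chaoticCat.{w2} s.pt
  ι := { app := fun k => ⟨chaoticFunctor (C := F.obj k) (fun x => s.ι.app k x)⟩
         naturality := fun k k' g => Cat.Hom.ext
           (chaotic_ext _ _ (fun x => congrArg Chaotic.mk (types_congr_hom (s.w g) x))) }

/-- The objects functor applied to a colimit cocone in `Cat` is a colimit in `Type`. -/
noncomputable def objIsColimit {F : K ⥤ Cat.{w2, w}} {c : Cocone F} (hc : IsColimit c) :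
    IsColimit (Cat.objects.{w2, w}.mapCocone c) where
  desc s := ↾fun p => ((hc.desc (chaoticCocone s)).toFunctor.obj p).as
  fac s k := by
    ext x
    exact congrArg Chaotic.as (cat_congr_obj (hc.fac (chaoticCocone s) k) x)
  uniq s m hm := by
    have := hc.uniq (chaoticCocone s) ⟨chaoticFunctor (C := c.pt) (fun x => m x)⟩
      (fun k => Cat.Hom.ext
        (chaotic_ext _ _ (fun x => congrArg Chaotic.mk (types_congr_hom (hm k) x))))
    ext b
    exact congrArg Chaotic.as (cat_congr_obj this b)

theorem obj_jointly_surjective {F : K ⥤ Cat.{w2, w}} {c : Cocone F} (hc : IsColimit c)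
    (p : c.pt) : ∃ (k : K) (x : F.obj k), (c.ι.app k).toFunctor.obj x = p :=
  Types.jointly_surjective _ (objIsColimit hc) p

theorem obj_eq_of_eq [IsFiltered K] {F : K ⥤ Cat.{w2, w}} {c : Cocone F} (hc : IsColimit c)
    {i j : K} {x : F.obj i} {y : F.obj j} (h : (c.ι.app i).toFunctor.obj x = (c.ι.app j).toFunctor.obj y) :
    ∃ (k : K) (s : i ⟶ k) (t : j ⟶ k), (F.map s).toFunctor.obj x = (F.map t).toFunctor.obj y := by
  haveI : HasColimit (F ⋙ Cat.objects.{w2, w}) := ⟨⟨⟨_, objIsColimit hc⟩⟩⟩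
  exact (Types.FilteredColimit.isColimit_eq_iff (F ⋙ Cat.objects.{w2, w})
    (objIsColimit hc) (i := i) (j := j)).mp h


section FromStage

variable {K : Type uu} [Category.{vv} K] (F : K ⥤ Cat.{w2, w}) (c : Cocone F)

/-- Morphisms in the cocone point which are, up to `eqToHom`, images of morphisms
from some stage of the diagram. -/
def FromStage : MorphismProperty c.pt := fun p q u =>
  ∃ (k : K) (x y : F.obj k) (φ : x ⟶ y) (hx : (c.ι.app k).toFunctor.obj x = p)
    (hy : (c.ι.app k).toFunctor.obj y = q),
    u = eqToHom hx.symm ≫ (c.ι.app k).toFunctor.map φ ≫ eqToHom hy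

theorem push_obj {k m : K} (g : k ⟶ m) (x : F.obj k) :
    (c.ι.app m).toFunctor.obj ((F.map g).toFunctor.obj x) = (c.ι.app k).toFunctor.obj x :=
  cat_congr_obj (c.w g) x

theorem push_map {k m : K} (g : k ⟶ m) {x y : F.obj k} (φ : x ⟶ y) :
    (c.ι.app k).toFunctor.map φ = eqToHom (push_obj F c g x).symm ≫
      (c.ι.app m).toFunctor.map ((F.map g).toFunctor.map φ) ≫ eqToHom (push_obj F c g y) := by
  have := cat_congr_hom (c.w g).symm φ
  simpa using this

variable [IsFiltered K]

theorem fromStage_isMultiplicative (hc : IsColimit c) :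
    (FromStage F c).IsMultiplicative where
  id_mem p := by
    obtain ⟨k, x, hx⟩ := obj_jointly_surjective hc p
    exact ⟨k, x, x, 𝟙 x, hx, hx, by simp⟩
  comp_mem {p q r} u v hu hv := by
    obtain ⟨k, x, y, φ, hx, hy, hu⟩ := hu
    obtain ⟨l, x', y', ψ, hx', hy', hv⟩ := hv
    obtain ⟨m, s, t, h⟩ := obj_eq_of_eq hc (i := k) (j := l) (x := y) (y := x') (hy.trans hx'.symm)
    refine ⟨m, (F.map s).toFunctor.obj x, (F.map t).toFunctor.obj y',
      (F.map s).toFunctor.map φ ≫ eqToHom h ≫ (F.map t).toFunctor.map ψ,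
      (push_obj F c s x).trans hx, (push_obj F c t y').trans hy', ?_⟩
    rw [hu, hv, push_map F c s φ, push_map F c t ψ]
    simp [eqToHom_map]

theorem fromStage_conj {p q p' q' : c.pt} (u : p ⟶ q) (hp : p = p') (hq : q = q')
    (h : FromStage F c u) :
    FromStage F c (eqToHom hp.symm ≫ u ≫ eqToHom hq) := by
  subst hp; subst hq; simpa using h

theorem wideSubcategory_eqToHom_val {C : Type w} [Category.{w2} C]
    {P : MorphismProperty C} [P.IsMultiplicative] {X Y : WideSubcategory P} (h : X = Y) :
    (eqToHom h).1 = eqToHom (congrArg WideSubcategory.obj h) := by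
  subst h; rfl

theorem hom_fromStage (hc : IsColimit c) {p q : c.pt} (u : p ⟶ q) :
    FromStage F c u := by
  haveI := fromStage_isMultiplicative F c hc
  let D : Cat.{w2, w} := Cat.of (WideSubcategory (FromStage F c))
  let lift : ∀ k : K, F.obj k ⟶ D := fun k => Cat.Hom.ofFunctor
    { obj := fun x => ⟨(c.ι.app k).toFunctor.obj x⟩
      map := fun {x y} φ => ⟨(c.ι.app k).toFunctor.map φ, ⟨k, x, y, φ, rfl, rfl, by simp⟩⟩
      map_id := fun x => WideSubcategory.hom_ext (h := (c.ι.app k).toFunctor.map_id x)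
      map_comp := fun φ ψ => WideSubcategory.hom_ext (h := (c.ι.app k).toFunctor.map_comp φ ψ) }
  have hobj : ∀ {k k' : K} (g : k ⟶ k') (x : F.obj k),
      (F.map g ≫ lift k').toFunctor.obj x = (lift k).toFunctor.obj x := by
    intro k k' g x
    show (⟨(c.ι.app k').toFunctor.obj ((F.map g).toFunctor.obj x)⟩ : WideSubcategory (FromStage F c)) = _
    rw [push_obj F c g x]
  let cc : Cocone F := ⟨D, ⟨lift, by
    intro k k' g
    refine Cat.Hom.ext <| CategoryTheory.Functor.ext (fun x => (hobj g x).trans rfl) ?_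
    intro x y φ
    apply WideSubcategory.hom_ext
    erw [WideSubcategory.comp_def, WideSubcategory.comp_def,
      wideSubcategory_eqToHom_val, wideSubcategory_eqToHom_val]
    show (c.ι.app k').toFunctor.map ((F.map g).toFunctor.map φ) = _ ≫ ((lift k ≫ 𝟙 D).toFunctor.map φ).1 ≫ _
    have : ((lift k ≫ 𝟙 D).toFunctor.map φ).1 = (c.ι.app k).toFunctor.map φ := rfl
    rw [this, push_map F c g φ]
    simp⟩⟩
  let R : c.pt ⟶ D := hc.desc cc
  have hfac : ∀ k, c.ι.app k ≫ (R ≫ Cat.Hom.ofFunctor (wideSubcategoryInclusion (FromStage F c))) = c.ι.app k := by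
    intro k
    rw [← Category.assoc, hc.fac cc k]
    rfl
  have E : R ≫ (Cat.Hom.ofFunctor (wideSubcategoryInclusion (FromStage F c)) : D ⟶ c.pt) = 𝟙 c.pt :=
    (hc.uniq c _ hfac).trans (hc.uniq c (𝟙 c.pt) (by simp)).symm
  have h := cat_congr_hom E u
  simp only [Cat.Hom.id_map] at h
  have hu : u = eqToHom (cat_congr_obj E p).symm ≫ (R.toFunctor.map u).1 ≫
      eqToHom (cat_congr_obj E q) := by
    rw [show ((R ≫ Cat.Hom.ofFunctor (wideSubcategoryInclusion (FromStage F c))).toFunctor.map u) = (R.toFunctor.map u).1 from rfl] at h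
    rw [h]
    erw [Category.assoc, eqToHom_trans_assoc, Category.assoc, eqToHom_trans, eqToHom_refl,
      eqToHom_refl, Category.comp_id, Category.id_comp]
  rw [hu]
  exact fromStage_conj F c (R.toFunctor.map u).1 (cat_congr_obj E p) (cat_congr_obj E q) (R.toFunctor.map u).2

end FromStage

section Main

variable {K : Type uu} [Category.{vv} K] [IsFiltered K]
variable (A B : K ⥤ Cat.{w2, w}) (f : A ⟶ B) (cA : Cocone A) (cB : Cocone B)
variable (G : cA.pt ⟶ cB.pt)

theorem gObj (hG : ∀ k, cA.ι.app k ≫ G = f.app k ≫ cB.ι.app k) {k : K} (x : A.obj k) :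
    G.toFunctor.obj ((cA.ι.app k).toFunctor.obj x) = (cB.ι.app k).toFunctor.obj ((f.app k).toFunctor.obj x) :=
  cat_congr_obj (hG k) x

/-- The functor from a structured arrow category at a stage to the structured arrow
category of the colimit comparison functor. -/
def stageFunctor (hG : ∀ k, cA.ι.app k ≫ G = f.app k ≫ cB.ι.app k) (m : K) (b' : B.obj m) :
    StructuredArrow b' (f.app m).toFunctor ⥤ StructuredArrow ((cB.ι.app m).toFunctor.obj b') G.toFunctor where
  obj j := StructuredArrow.mk (Y := (cA.ι.app m).toFunctor.obj j.right)
    ((cB.ι.app m).toFunctor.map j.hom ≫ eqToHom (gObj A B f cA cB G hG j.right).symm)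
  map {j j'} w := StructuredArrow.homMk ((cA.ι.app m).toFunctor.map w.right) (by
    have hw := StructuredArrow.w w
    have h1 := cat_congr_hom (hG m) w.right
    dsimp at h1 ⊢
    rw [h1, ← hw]
    simp [← Functor.map_comp_assoc])
  map_id j := by
    apply StructuredArrow.hom_ext
    simp
  map_comp w w' := by
    apply StructuredArrow.hom_ext
    simp

theorem map_comp_obj (F : K ⥤ Cat.{w2, w}) {i j k : K} (g : i ⟶ j) (h : j ⟶ k) (x : F.obj i) :
    (F.map (g ≫ h)).toFunctor.obj x = (F.map h).toFunctor.obj ((F.map g).toFunctor.obj x) :=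
  cat_congr_obj (F.map_comp g h) x

theorem refine_stage (hA : IsColimit cA) (hB : IsColimit cB)
    (hG : ∀ k, cA.ι.app k ≫ G = f.app k ≫ cB.ι.app k)
    {m₀ : K} (b₀ : B.obj m₀) (a : cA.pt) (u : (cB.ι.app m₀).toFunctor.obj b₀ ⟶ G.toFunctor.obj a) :
    ∃ (m : K) (t : m₀ ⟶ m) (a' : A.obj m) (v : (B.map t).toFunctor.obj b₀ ⟶ (f.app m).toFunctor.obj a')
      (h2 : (cB.ι.app m).toFunctor.obj ((f.app m).toFunctor.obj a') = G.toFunctor.obj a),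
      (cA.ι.app m).toFunctor.obj a' = a ∧
      u = eqToHom (push_obj B cB t b₀).symm ≫ (cB.ι.app m).toFunctor.map v ≫ eqToHom h2 := by
  have nat : ∀ {i j : K} (g : i ⟶ j) (x : A.obj i),
      (B.map g).toFunctor.obj ((f.app i).toFunctor.obj x) = (f.app j).toFunctor.obj ((A.map g).toFunctor.obj x) :=
    fun g x => (cat_congr_obj (f.naturality g) x).symm
  obtain ⟨k, a₁, ha₁⟩ := obj_jointly_surjective hA a
  obtain ⟨l, x, y, φ, hx, hy, hu⟩ := hom_fromStage B cB hB u
  have hy' : (cB.ι.app l).toFunctor.obj y = (cB.ι.app k).toFunctor.obj ((f.app k).toFunctor.obj a₁) := by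
    rw [hy, ← ha₁, gObj A B f cA cB G hG a₁]
  obtain ⟨n₁, s₁, t₁, h₁⟩ := obj_eq_of_eq hB (i := l) (j := m₀) (x := x) (y := b₀) hx
  obtain ⟨n₂, s₂, t₂, h₂⟩ := obj_eq_of_eq hB (i := l) (j := k) (x := y)
    (y := (f.app k).toFunctor.obj a₁) hy'
  let j₁ : n₁ ⟶ IsFiltered.max n₁ n₂ := IsFiltered.leftToMax n₁ n₂
  let j₂ : n₂ ⟶ IsFiltered.max n₁ n₂ := IsFiltered.rightToMax n₁ n₂
  let m : K := IsFiltered.coeq (s₁ ≫ j₁) (s₂ ≫ j₂)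
  let e : IsFiltered.max n₁ n₂ ⟶ m := IsFiltered.coeqHom (s₁ ≫ j₁) (s₂ ≫ j₂)
  let q₁ : n₁ ⟶ m := j₁ ≫ e
  let q₂ : n₂ ⟶ m := j₂ ≫ e
  let r : l ⟶ m := s₁ ≫ q₁
  have hr : r = s₂ ≫ q₂ := by
    have := IsFiltered.coeq_condition (s₁ ≫ j₁) (s₂ ≫ j₂)
    simp only [r, q₁, q₂, ← Category.assoc]
    rw [this]
  let t : m₀ ⟶ m := t₁ ≫ q₁
  let a' : A.obj m := (A.map (t₂ ≫ q₂)).toFunctor.obj a₁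
  have e₁ : (B.map t).toFunctor.obj b₀ = (B.map r).toFunctor.obj x := by
    show (B.map (t₁ ≫ q₁)).toFunctor.obj b₀ = (B.map (s₁ ≫ q₁)).toFunctor.obj x
    rw [map_comp_obj B t₁ q₁, map_comp_obj B s₁ q₁, h₁]
  have e₂ : (B.map r).toFunctor.obj y = (f.app m).toFunctor.obj a' := by
    rw [hr]
    show (B.map (s₂ ≫ q₂)).toFunctor.obj y = (f.app m).toFunctor.obj ((A.map (t₂ ≫ q₂)).toFunctor.obj a₁)
    rw [map_comp_obj B s₂ q₂, h₂, ← map_comp_obj B t₂ q₂, nat]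
  have h2 : (cB.ι.app m).toFunctor.obj ((f.app m).toFunctor.obj a') = G.toFunctor.obj a := by
    rw [← nat, push_obj B cB (t₂ ≫ q₂) ((f.app k).toFunctor.obj a₁), ← gObj A B f cA cB G hG a₁, ha₁]
  refine ⟨m, t, a', eqToHom e₁ ≫ (B.map r).toFunctor.map φ ≫ eqToHom e₂, h2,
    (push_obj A cA (t₂ ≫ q₂) a₁).trans ha₁, ?_⟩
  rw [hu, push_map B cB r φ]
  simp [eqToHom_map]

theorem push_rep (hG : ∀ k, cA.ι.app k ≫ G = f.app k ≫ cB.ι.app k)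
    {m₀ m m' : K} (t : m₀ ⟶ m) (t' : m ⟶ m') (b₀ : B.obj m₀) (a : cA.pt)
    (u : (cB.ι.app m₀).toFunctor.obj b₀ ⟶ G.toFunctor.obj a) (a' : A.obj m)
    (v : (B.map t).toFunctor.obj b₀ ⟶ (f.app m).toFunctor.obj a')
    (h2 : (cB.ι.app m).toFunctor.obj ((f.app m).toFunctor.obj a') = G.toFunctor.obj a)
    (ha' : (cA.ι.app m).toFunctor.obj a' = a)
    (hu : u = eqToHom (push_obj B cB t b₀).symm ≫ (cB.ι.app m).toFunctor.map v ≫ eqToHom h2) :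
    ∃ (v' : (B.map (t ≫ t')).toFunctor.obj b₀ ⟶ (f.app m').toFunctor.obj ((A.map t').toFunctor.obj a'))
      (h2' : (cB.ι.app m').toFunctor.obj ((f.app m').toFunctor.obj ((A.map t').toFunctor.obj a')) = G.toFunctor.obj a),
      (cA.ι.app m').toFunctor.obj ((A.map t').toFunctor.obj a') = a ∧
      u = eqToHom (push_obj B cB (t ≫ t') b₀).symm ≫ (cB.ι.app m').toFunctor.map v' ≫ eqToHom h2' := by
  have nat : (B.map t').toFunctor.obj ((f.app m).toFunctor.obj a') = (f.app m').toFunctor.obj ((A.map t').toFunctor.obj a') :=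
    (cat_congr_obj (f.naturality t') a').symm
  have h2' : (cB.ι.app m').toFunctor.obj ((f.app m').toFunctor.obj ((A.map t').toFunctor.obj a')) = G.toFunctor.obj a := by
    rw [← nat, push_obj B cB t' ((f.app m).toFunctor.obj a'), h2]
  refine ⟨eqToHom (map_comp_obj B t t' b₀) ≫ (B.map t').toFunctor.map v ≫ eqToHom nat, h2',
    (push_obj A cA t' a').trans ha', ?_⟩
  rw [hu, push_map B cB t' v]
  simp [eqToHom_map]

theorem rebase_rep {m₀ m₁ m₂ : K} (ta : m₀ ⟶ m₁) (tb : m₁ ⟶ m₂) (b₀ : B.obj m₀)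
    {p : cB.pt} (u : (cB.ι.app m₀).toFunctor.obj b₀ ⟶ p) (a₂' : B.obj m₂)
    (v : (B.map tb).toFunctor.obj ((B.map ta).toFunctor.obj b₀) ⟶ a₂')
    (h2 : (cB.ι.app m₂).toFunctor.obj a₂' = p)
    (hu : eqToHom (push_obj B cB ta b₀) ≫ u =
      eqToHom (push_obj B cB tb ((B.map ta).toFunctor.obj b₀)).symm ≫ (cB.ι.app m₂).toFunctor.map v ≫ eqToHom h2) :
    u = eqToHom (push_obj B cB (ta ≫ tb) b₀).symm ≫
      (cB.ι.app m₂).toFunctor.map (eqToHom (map_comp_obj B ta tb b₀) ≫ v) ≫ eqToHom h2 := by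
  have : u = eqToHom (push_obj B cB ta b₀).symm ≫ (eqToHom (push_obj B cB ta b₀) ≫ u) := by
    simp
  rw [this, hu]
  simp [eqToHom_map]

end Main

end FccAux

/-- A filtered colimit of final (cofinal) functors is final: given a filtered
diagram of arrows `fᵏ : Aᵏ → Bᵏ` in `Cat` (i.e. a natural transformation
`f : A ⟶ B` of filtered diagrams of categories), each of whose components is
final, the induced functor `colim A ⟶ colim B` between the colimits is
final. -/


theorem filtered_colimit_of_final_is_final
    {K : Type u} [Category.{v} K] [IsFiltered K]
    (A B : K ⥤ Cat.{v₂, u₂}) (f : A ⟶ B)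
    (hf : ∀ k : K, (f.app k).toFunctor.Final)
    (cA : Cocone A) (cB : Cocone B)
    (hA : IsColimit cA) (_ : IsColimit cB) :
    (hA.desc (Cocone.mk cB.pt (f ≫ cB.ι))).toFunctor.Final := by
  rename_i hB
  have hG : ∀ k, cA.ι.app k ≫ hA.desc (Cocone.mk cB.pt (f ≫ cB.ι)) =
      f.app k ≫ cB.ι.app k := fun k => hA.fac (Cocone.mk cB.pt (f ≫ cB.ι)) k
  set G := hA.desc (Cocone.mk cB.pt (f ≫ cB.ι)) with hGdef
  constructor
  intro b
  obtain ⟨k₀, b₀, hb₀⟩ := FccAux.obj_jointly_surjective hB b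
  subst hb₀
  haveI := (hf k₀).out b₀
  haveI : Nonempty (StructuredArrow ((cB.ι.app k₀).toFunctor.obj b₀) G.toFunctor) :=
    ⟨(FccAux.stageFunctor A B f cA cB G hG k₀ b₀).obj (Classical.arbitrary _)⟩
  apply zigzag_isConnected
  intro j₁ j₂
  obtain ⟨⟨⟨⟩⟩, a₁, u₁⟩ := j₁
  obtain ⟨⟨⟨⟩⟩, a₂, u₂⟩ := j₂
  obtain ⟨m₁, ta, a₁', v₁, h2₁, ha₁, hu₁⟩ :=
    FccAux.refine_stage A B f cA cB G hA hB hG b₀ a₁ u₁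
  obtain ⟨m₂, tb, a₂', v₂, h2₂, ha₂, hu₂⟩ :=
    FccAux.refine_stage A B f cA cB G hA hB hG ((B.map ta).toFunctor.obj b₀) a₂
      (eqToHom (FccAux.push_obj B cB ta b₀) ≫ u₂)
  obtain ⟨v₁', h2₁', ha₁', hu₁'⟩ :=
    FccAux.push_rep A B f cA cB G hG ta tb b₀ a₁ u₁ a₁' v₁ h2₁ ha₁ hu₁
  have hu₂' := FccAux.rebase_rep B cB ta tb b₀ u₂ _ v₂ h2₂ hu₂
  clear hu₁ hu₂ ha₁ h2₁ v₁
  subst ha₁'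
  subst ha₂
  subst hu₁'
  subst hu₂'
  let b₂ := (B.map (ta ≫ tb)).toFunctor.obj b₀
  let Ψ := FccAux.stageFunctor A B f cA cB G hG m₂ b₂ ⋙
    StructuredArrow.map (eqToHom (FccAux.push_obj B cB (ta ≫ tb) b₀).symm)
  haveI := (hf m₂).out b₂
  have z := zigzag_obj_of_zigzag Ψ
    (isPreconnected_zigzag (StructuredArrow.mk v₁')
      (StructuredArrow.mk (eqToHom (FccAux.map_comp_obj B ta tb b₀) ≫ v₂)))
  exact z
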